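/- The q-series identity E_2 E_4 - E_6 = 3 D E_4 holds, where D = q d/dq and E_2, E_4, E_6 are the normalized Eisenstein series of weights 2, 4, 6. -/

import Mathlib

open PowerSeries

/-- The operator `D = q d/dq` on formal power series. -/
noncomputable def Dq (f : PowerSeries ℚ) : PowerSeries ℚ :=
  PowerSeries.mk fun n => (n : ℚ) * PowerSeries.coeff n f

/-- The normalized Eisenstein series `E_2` as a formal `q`-series. -/
noncomputable def E2 : PowerSeries ℚ :=
  PowerSeries.mk fun n => if n = 0 then 1 else -24 * (ArithmeticFunction.sigma 1 n : ℚ)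

/-- The normalized Eisenstein series `E_4` as a formal `q`-series. -/
noncomputable def E4 : PowerSeries ℚ :=
  PowerSeries.mk fun n => if n = 0 then 1 else 240 * (ArithmeticFunction.sigma 3 n : ℚ)

/-- The normalized Eisenstein series `E_6` as a formal `q`-series. -/
noncomputable def E6 : PowerSeries ℚ :=
  PowerSeries.mk fun n => if n = 0 then 1 else -504 * (ArithmeticFunction.sigma 5 n : ℚ)

open Finset

/-- Fq definition. -/
noncomputable def Fq (a b : ℕ) : ℚ :=
  (a:ℚ)^4 + (b:ℚ)^4 + 2*(a:ℚ)^3*(b:ℚ) + 2*(a:ℚ)*(b:ℚ)^3 + 3*(a:ℚ)^2*(b:ℚ)^2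


/-- Solution set: pairs ((a,x),(b,y)) of positive naturals with a*x+b*y = n. -/
noncomputable def Zs (n : ℕ) : Finset ((ℕ × ℕ) × (ℕ × ℕ)) :=
  ((range (n+1) ×ˢ range (n+1)) ×ˢ (range (n+1) ×ˢ range (n+1))).filter
    (fun p => p.1.1 * p.1.2 + p.2.1 * p.2.2 = n ∧ 0 < p.1.1 ∧ 0 < p.1.2 ∧ 0 < p.2.1 ∧ 0 < p.2.2)

lemma mem_Zs {n : ℕ} {p : (ℕ × ℕ) × (ℕ × ℕ)} :
    p ∈ Zs n ↔ p.1.1 * p.1.2 + p.2.1 * p.2.2 = n ∧ 0 < p.1.1 ∧ 0 < p.1.2 ∧ 0 < p.2.1 ∧ 0 < p.2.2 := by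
  unfold Zs
  rw [Finset.mem_filter]
  constructor
  · rintro ⟨-, h⟩; exact h
  · rintro ⟨he, h1, h2, h3, h4⟩
    refine ⟨?_, he, h1, h2, h3, h4⟩
    have k1 : p.1.1 * p.1.2 ≤ n := by omega
    have k2 : p.2.1 * p.2.2 ≤ n := by omega
    have l1 : p.1.1 ≤ p.1.1 * p.1.2 := Nat.le_mul_of_pos_right _ h2
    have l2 : p.1.2 ≤ p.1.1 * p.1.2 := Nat.le_mul_of_pos_left _ h1
    have l3 : p.2.1 ≤ p.2.1 * p.2.2 := Nat.le_mul_of_pos_right _ h4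
    have l4 : p.2.2 ≤ p.2.1 * p.2.2 := Nat.le_mul_of_pos_left _ h3
    simp only [Finset.mem_product, Finset.mem_range]
    omega

lemma split3 {α : Type*} (s : Finset α) (f : α → ℚ) (g h : α → ℕ) :
    ∑ p ∈ s, f p =
      ∑ p ∈ s.filter (fun p => h p < g p), f p +
      ∑ p ∈ s.filter (fun p => g p < h p), f p +
      ∑ p ∈ s.filter (fun p => g p = h p), f p := by
  classical
  rw [← Finset.sum_filter_add_sum_filter_not s (fun p => h p < g p) f]
  rw [← Finset.sum_filter_add_sum_filter_not (s.filter (fun p => ¬ h p < g p))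
    (fun p => g p < h p) f]
  rw [Finset.filter_filter, Finset.filter_filter]
  have e1 : s.filter (fun a => ¬ h a < g a ∧ g a < h a) = s.filter (fun p => g p < h p) :=
    Finset.filter_congr (by intro x _; simp; omega)
  have e2 : s.filter (fun a => ¬ h a < g a ∧ ¬ g a < h a) = s.filter (fun p => g p = h p) :=
    Finset.filter_congr (by intro x _; simp; omega)
  rw [e1, e2, add_assoc]

lemma arith1 (a x b y n : ℕ) (h : y < x) (he : a*x + b*y = n) :
    (a+b)*y + a*(x-y) = n := by
  have hx : x - y + y = x := by omega
  calc (a+b)*y + a*(x-y) = a*((x-y)+y) + b*y := by ring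
    _ = n := by rw [hx]; exact he

lemma arith1' (A X B Y n : ℕ) (h : B < A) (he : A*X + B*Y = n) :
    B*(Y+X) + (A-B)*X = n := by
  have hA : A - B + B = A := by omega
  calc B*(Y+X) + (A-B)*X = ((A-B)+B)*X + B*Y := by ring
    _ = n := by rw [hA]; exact he

lemma arith2 (a x b y n : ℕ) (h : x < y) (he : a*x + b*y = n) :
    (a+b)*x + b*(y-x) = n := by
  have hy : y - x + x = y := by omega
  calc (a+b)*x + b*(y-x) = a*x + b*((y-x)+x) := by ring
    _ = n := by rw [hy]; exact he

lemma arith2' (A X B Y n : ℕ) (h : B < A) (he : A*X + B*Y = n) :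
    (A-B)*X + B*(Y+X) = n := by
  have hA : A - B + B = A := by omega
  calc (A-B)*X + B*(Y+X) = ((A-B)+B)*X + B*Y := by ring
    _ = n := by rw [hA]; exact he

/-- Liouville bijection 1: {x > y} ↔ {a > b}. -/
lemma bij1 (n : ℕ) (w : ℕ → ℕ → ℚ) :
    ∑ p ∈ (Zs n).filter (fun p => p.2.2 < p.1.2), w p.1.1 p.2.1
    = ∑ q ∈ (Zs n).filter (fun q => q.2.1 < q.1.1), w q.2.1 (q.1.1 - q.2.1) := by
  apply Finset.sum_nbij'
    (i := fun p => ((p.1.1 + p.2.1, p.2.2), (p.1.1, p.1.2 - p.2.2)))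
    (j := fun q => ((q.2.1, q.2.2 + q.1.2), (q.1.1 - q.2.1, q.1.2)))
  · rintro ⟨⟨a, x⟩, b, y⟩ hp
    rw [Finset.mem_filter, mem_Zs] at hp ⊢
    obtain ⟨⟨he, h1, h2, h3, h4⟩, hlt⟩ := hp
    simp only at *
    exact ⟨⟨arith1 a x b y n hlt he, by omega, by omega, by omega, by omega⟩, by omega⟩
  · rintro ⟨⟨A, X⟩, B, Y⟩ hq
    rw [Finset.mem_filter, mem_Zs] at hq ⊢
    obtain ⟨⟨he, h1, h2, h3, h4⟩, hlt⟩ := hq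
    simp only at *
    exact ⟨⟨arith1' A X B Y n hlt he, by omega, by omega, by omega, by omega⟩, by omega⟩
  · rintro ⟨⟨a, x⟩, b, y⟩ hp
    rw [Finset.mem_filter, mem_Zs] at hp
    obtain ⟨⟨he, h1, h2, h3, h4⟩, hlt⟩ := hp
    simp only at *
    ext <;> simp <;> omega
  · rintro ⟨⟨A, X⟩, B, Y⟩ hq
    rw [Finset.mem_filter, mem_Zs] at hq
    obtain ⟨⟨he, h1, h2, h3, h4⟩, hlt⟩ := hq
    simp only at *
    ext <;> simp <;> omega
  · rintro ⟨⟨a, x⟩, b, y⟩ hp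
    rw [Finset.mem_filter, mem_Zs] at hp
    simp only at *
    rw [show a + b - a = b by omega]

/-- Global swap of the two pairs. -/
lemma swap_whole (n : ℕ) (w : ℕ → ℕ → ℚ) :
    ∑ p ∈ Zs n, w p.1.1 p.2.1 = ∑ p ∈ Zs n, w p.2.1 p.1.1 := by
  apply Finset.sum_nbij' (i := fun p => (p.2, p.1)) (j := fun p => (p.2, p.1))
  · rintro ⟨⟨a, x⟩, b, y⟩ hp; rw [mem_Zs] at hp ⊢; simp only at *; omega
  · rintro ⟨⟨a, x⟩, b, y⟩ hp; rw [mem_Zs] at hp ⊢; simp only at *; omega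
  · rintro ⟨⟨a, x⟩, b, y⟩ _; rfl
  · rintro ⟨⟨a, x⟩, b, y⟩ _; rfl
  · rintro ⟨⟨a, x⟩, b, y⟩ _; rfl

lemma swap_lt (n : ℕ) (w : ℕ → ℕ → ℚ) :
    ∑ p ∈ (Zs n).filter (fun p => p.1.1 < p.2.1), w p.1.1 p.2.1
    = ∑ p ∈ (Zs n).filter (fun p => p.2.1 < p.1.1), w p.2.1 p.1.1 := by
  apply Finset.sum_nbij' (i := fun p => (p.2, p.1)) (j := fun p => (p.2, p.1))
  · rintro ⟨⟨a, x⟩, b, y⟩ hp; rw [Finset.mem_filter, mem_Zs] at hp ⊢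
    simp only at *; omega
  · rintro ⟨⟨a, x⟩, b, y⟩ hp; rw [Finset.mem_filter, mem_Zs] at hp ⊢
    simp only at *; omega
  · rintro ⟨⟨a, x⟩, b, y⟩ _; rfl
  · rintro ⟨⟨a, x⟩, b, y⟩ _; rfl
  · rintro ⟨⟨a, x⟩, b, y⟩ _; rfl

/-- Diagonal x = y: reduces to a divisor sum. -/
lemma diag_xy (n : ℕ) (w : ℕ → ℕ → ℚ) :
    ∑ p ∈ (Zs n).filter (fun p => p.1.2 = p.2.2), w p.1.1 p.2.1
    = ∑ e ∈ n.divisors, ∑ a ∈ Ico 1 e, w a (e - a) := by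
  rw [← Finset.sum_sigma (n.divisors) (fun e => Ico 1 e) (fun x => w x.2 (x.1 - x.2))]
  apply Finset.sum_nbij' (i := fun p => (⟨p.1.1 + p.2.1, p.1.1⟩ : Σ _ : ℕ, ℕ))
    (j := fun q => ((q.2, n / q.1), (q.1 - q.2, n / q.1)))
  · rintro ⟨⟨a, x⟩, b, y⟩ hp
    rw [Finset.mem_filter, mem_Zs] at hp
    obtain ⟨⟨he, h1, h2, h3, h4⟩, hxy⟩ := hp
    simp only at *
    subst hxy
    have hn : (a + b) * x = n := by rw [add_mul]; exact he
    simp only [Finset.mem_sigma, Nat.mem_divisors, Finset.mem_Ico]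
    refine ⟨⟨⟨x, hn.symm⟩, ?_⟩, by omega, by omega⟩
    rw [← hn]; positivity
  · rintro ⟨e, a⟩ hq
    simp only [Finset.mem_sigma, Nat.mem_divisors, Finset.mem_Ico] at hq
    obtain ⟨⟨hdvd, hn⟩, ha1, hae⟩ := hq
    simp only [Finset.mem_filter, mem_Zs]
    have hepos : 0 < e := by omega
    have hqpos : 0 < n / e := Nat.div_pos (Nat.le_of_dvd (Nat.pos_of_ne_zero hn) hdvd) hepos
    have he : e * (n / e) = n := Nat.mul_div_cancel' hdvd
    refine ⟨⟨?_, by omega, hqpos, by omega, hqpos⟩, trivial⟩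
    calc a * (n/e) + (e-a) * (n/e) = (a + (e-a)) * (n/e) := by ring
      _ = e * (n/e) := by rw [show a + (e-a) = e by omega]
      _ = n := he
  · rintro ⟨⟨a, x⟩, b, y⟩ hp
    rw [Finset.mem_filter, mem_Zs] at hp
    obtain ⟨⟨he, h1, h2, h3, h4⟩, hxy⟩ := hp
    simp only at *
    subst hxy
    have hn : (a + b) * x = n := by rw [add_mul]; exact he
    have hx : n / (a + b) = x := by
      rw [← hn]; exact Nat.mul_div_cancel_left x (by omega)
    simp only [hx]
    congr 2 <;> omega
  · rintro ⟨e, a⟩ hq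
    simp only [Finset.mem_sigma, Nat.mem_divisors, Finset.mem_Ico] at hq
    obtain ⟨⟨hdvd, hn⟩, ha1, hae⟩ := hq
    simp only
    congr 1 <;> omega
  · rintro ⟨⟨a, x⟩, b, y⟩ hp
    rw [Finset.mem_filter, mem_Zs] at hp
    simp only at *
    rw [show a + b - a = b by omega]

/-- Diagonal a = b: reduces to a divisor sum. -/
lemma diag_ab (n : ℕ) (w : ℕ → ℕ → ℚ) :
    ∑ p ∈ (Zs n).filter (fun p => p.1.1 = p.2.1), w p.1.1 p.2.1
    = ∑ e ∈ n.divisors, ∑ _x ∈ Ico 1 e, w (n / e) (n / e) := by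
  rw [← Finset.sum_sigma (n.divisors) (fun e => Ico 1 e) (fun x => w (n / x.1) (n / x.1))]
  apply Finset.sum_nbij' (i := fun p => (⟨p.1.2 + p.2.2, p.1.2⟩ : Σ _ : ℕ, ℕ))
    (j := fun q => ((n / q.1, q.2), (n / q.1, q.1 - q.2)))
  · rintro ⟨⟨a, x⟩, b, y⟩ hp
    rw [Finset.mem_filter, mem_Zs] at hp
    obtain ⟨⟨he, h1, h2, h3, h4⟩, hab⟩ := hp
    simp only at *
    subst hab
    have hn : a * (x + y) = n := by rw [mul_add]; exact he
    simp only [Finset.mem_sigma, Nat.mem_divisors, Finset.mem_Ico]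
    refine ⟨⟨⟨a, by rw [← hn]; ring⟩, ?_⟩, by omega, by omega⟩
    rw [← hn]; positivity
  · rintro ⟨e, x⟩ hq
    simp only [Finset.mem_sigma, Nat.mem_divisors, Finset.mem_Ico] at hq
    obtain ⟨⟨hdvd, hn⟩, hx1, hxe⟩ := hq
    simp only [Finset.mem_filter, mem_Zs]
    have hepos : 0 < e := by omega
    have hqpos : 0 < n / e := Nat.div_pos (Nat.le_of_dvd (Nat.pos_of_ne_zero hn) hdvd) hepos
    have he : (n / e) * e = n := Nat.div_mul_cancel hdvd
    refine ⟨⟨?_, hqpos, by omega, hqpos, by omega⟩, trivial⟩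
    calc (n/e) * x + (n/e) * (e-x) = (n/e) * (x + (e-x)) := by ring
      _ = (n/e) * e := by rw [show x + (e-x) = e by omega]
      _ = n := he
  · rintro ⟨⟨a, x⟩, b, y⟩ hp
    rw [Finset.mem_filter, mem_Zs] at hp
    obtain ⟨⟨he, h1, h2, h3, h4⟩, hab⟩ := hp
    simp only at *
    subst hab
    have hn : (x + y) * a = n := by rw [mul_comm, mul_add]; exact he
    have hx : n / (x + y) = a := by
      rw [← hn]; exact Nat.mul_div_cancel_left a (by omega)
    simp only [hx]
    congr 2 <;> omega
  · rintro ⟨e, x⟩ hq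
    simp only [Finset.mem_sigma, Nat.mem_divisors, Finset.mem_Ico] at hq
    obtain ⟨⟨hdvd, hn⟩, hx1, hxe⟩ := hq
    simp only
    congr 1 <;> omega
  · rintro ⟨⟨a, x⟩, b, y⟩ hp
    rw [Finset.mem_filter, mem_Zs] at hp
    obtain ⟨⟨he, h1, h2, h3, h4⟩, hab⟩ := hp
    simp only at *
    subst hab
    have hn : (x + y) * a = n := by rw [mul_comm, mul_add]; exact he
    have hx : n / (x + y) = a := by
      rw [← hn]; exact Nat.mul_div_cancel_left a (by omega)
    rw [hx]

/-- Liouville bijection 2: {x < y} ↔ {a > b}. -/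
lemma bij2 (n : ℕ) (w : ℕ → ℕ → ℚ) :
    ∑ p ∈ (Zs n).filter (fun p => p.1.2 < p.2.2), w p.1.1 p.2.1
    = ∑ q ∈ (Zs n).filter (fun q => q.2.1 < q.1.1), w (q.1.1 - q.2.1) q.2.1 := by
  apply Finset.sum_nbij'
    (i := fun p => ((p.1.1 + p.2.1, p.1.2), (p.2.1, p.2.2 - p.1.2)))
    (j := fun q => ((q.1.1 - q.2.1, q.1.2), (q.2.1, q.2.2 + q.1.2)))
  · rintro ⟨⟨a, x⟩, b, y⟩ hp
    rw [Finset.mem_filter, mem_Zs] at hp ⊢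
    obtain ⟨⟨he, h1, h2, h3, h4⟩, hlt⟩ := hp
    simp only at *
    exact ⟨⟨arith2 a x b y n hlt he, by omega, by omega, by omega, by omega⟩, by omega⟩
  · rintro ⟨⟨A, X⟩, B, Y⟩ hq
    rw [Finset.mem_filter, mem_Zs] at hq ⊢
    obtain ⟨⟨he, h1, h2, h3, h4⟩, hlt⟩ := hq
    simp only at *
    exact ⟨⟨arith2' A X B Y n hlt he, by omega, by omega, by omega, by omega⟩, by omega⟩
  · rintro ⟨⟨a, x⟩, b, y⟩ hp
    rw [Finset.mem_filter, mem_Zs] at hp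
    obtain ⟨⟨he, h1, h2, h3, h4⟩, hlt⟩ := hp
    simp only at *
    ext <;> simp <;> omega
  · rintro ⟨⟨A, X⟩, B, Y⟩ hq
    rw [Finset.mem_filter, mem_Zs] at hq
    obtain ⟨⟨he, h1, h2, h3, h4⟩, hlt⟩ := hq
    simp only at *
    ext <;> simp <;> omega
  · rintro ⟨⟨a, x⟩, b, y⟩ hp
    rw [Finset.mem_filter, mem_Zs] at hp
    simp only at *
    rw [show a + b - b = a by omega]

/-- The symmetric quartic weight. -/
lemma rangeSum (E : ℚ) (e : ℕ) :
    ∑ a ∈ range e, ((a:ℚ)^4 - 2*E*(a:ℚ)^3 + 3*E^2*(a:ℚ)^2 - 2*E^3*(a:ℚ) + E^4)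
    = (6*(e:ℚ)^5 - 15*(e:ℚ)^4 + 10*(e:ℚ)^3 - (e:ℚ))/30
      - 2*E*((e:ℚ)^4 - 2*(e:ℚ)^3 + (e:ℚ)^2)/4
      + 3*E^2*(2*(e:ℚ)^3 - 3*(e:ℚ)^2 + (e:ℚ))/6
      - 2*E^3*((e:ℚ)^2 - (e:ℚ))/2 + E^4*(e:ℚ) := by
  induction e with
  | zero => simp
  | succ m ih => rw [Finset.sum_range_succ, ih]; push_cast; ring

lemma inner_eval {e : ℕ} (he : 0 < e) :
    ∑ a ∈ Ico 1 e, Fq a (e - a)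
    = (21*(e:ℚ)^5 - 30*(e:ℚ)^4 + 10*(e:ℚ)^3 - (e:ℚ))/30 := by
  have hsplit : ∑ a ∈ range e, Fq a (e - a) = Fq 0 e + ∑ a ∈ Ico 1 e, Fq a (e - a) := by
    rw [Finset.range_eq_Ico, Finset.sum_eq_sum_Ico_succ_bot he]
    simp
  have hpt : ∀ a ∈ range e, Fq a (e - a)
      = ((a:ℚ)^4 - 2*(e:ℚ)*(a:ℚ)^3 + 3*(e:ℚ)^2*(a:ℚ)^2 - 2*(e:ℚ)^3*(a:ℚ) + (e:ℚ)^4) := by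
    intro a ha
    rw [Finset.mem_range] at ha
    have hc : ((e - a : ℕ) : ℚ) = (e:ℚ) - (a:ℚ) := by
      rw [Nat.cast_sub ha.le]
    unfold Fq
    rw [hc]; ring
  have h2 : ∑ a ∈ range e, Fq a (e - a)
      = (6*(e:ℚ)^5 - 15*(e:ℚ)^4 + 10*(e:ℚ)^3 - (e:ℚ))/30
      - 2*(e:ℚ)*((e:ℚ)^4 - 2*(e:ℚ)^3 + (e:ℚ)^2)/4
      + 3*(e:ℚ)^2*(2*(e:ℚ)^3 - 3*(e:ℚ)^2 + (e:ℚ))/6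
      - 2*(e:ℚ)^3*((e:ℚ)^2 - (e:ℚ))/2 + (e:ℚ)^4*(e:ℚ) := by
    rw [Finset.sum_congr rfl hpt, rangeSum]
  have h0 : Fq 0 e = (e:ℚ)^4 := by unfold Fq; push_cast; ring
  have := hsplit.symm.trans h2
  rw [h0] at this
  linarith [this]

lemma conv_to_Z (n : ℕ) (w : ℕ → ℕ → ℚ) :
    ∑ ij ∈ antidiagonal n, ∑ p ∈ ij.1.divisorsAntidiagonal,
      ∑ q ∈ ij.2.divisorsAntidiagonal, w p.1 q.1
    = ∑ p ∈ Zs n, w p.1.1 p.2.1 := by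
  have h1 : ∀ ij : ℕ × ℕ, ∑ p ∈ ij.1.divisorsAntidiagonal, ∑ q ∈ ij.2.divisorsAntidiagonal, w p.1 q.1
      = ∑ pq ∈ ij.1.divisorsAntidiagonal ×ˢ ij.2.divisorsAntidiagonal, w pq.1.1 pq.2.1 := by
    intro ij; rw [Finset.sum_product]
  rw [Finset.sum_congr rfl (fun ij _ => h1 ij),
    ← Finset.sum_sigma (antidiagonal n)
      (fun ij => ij.1.divisorsAntidiagonal ×ˢ ij.2.divisorsAntidiagonal)
      (fun x => w x.2.1.1 x.2.2.1)]
  apply Finset.sum_nbij' (i := fun x => x.2)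
    (j := fun p => (⟨(p.1.1 * p.1.2, p.2.1 * p.2.2), p⟩ :
      Σ _ : ℕ × ℕ, (ℕ × ℕ) × (ℕ × ℕ)))
  · rintro ⟨⟨i, j⟩, ⟨⟨a, x⟩, ⟨b, y⟩⟩⟩ hx
    simp only [Finset.mem_sigma, Finset.mem_product, Finset.HasAntidiagonal.mem_antidiagonal,
      Nat.mem_divisorsAntidiagonal] at hx
    obtain ⟨hij, ⟨hax, hi⟩, ⟨hby, hj⟩⟩ := hx
    rw [mem_Zs]
    simp only
    have ha := Nat.mul_ne_zero_iff.mp (by rw [hax]; exact hi)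
    have hb := Nat.mul_ne_zero_iff.mp (by rw [hby]; exact hj)
    refine ⟨by rw [hax, hby]; exact hij, ?_, ?_, ?_, ?_⟩ <;> omega
  · rintro ⟨⟨a, x⟩, ⟨b, y⟩⟩ hp
    rw [mem_Zs] at hp
    obtain ⟨he, h1, h2, h3, h4⟩ := hp
    simp only [Finset.mem_sigma, Finset.mem_product, Finset.HasAntidiagonal.mem_antidiagonal,
      Nat.mem_divisorsAntidiagonal]
    refine ⟨he, ⟨trivial, by positivity⟩, trivial, by positivity⟩
  · rintro ⟨⟨i, j⟩, ⟨⟨a, x⟩, ⟨b, y⟩⟩⟩ hx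
    simp only [Finset.mem_sigma, Finset.mem_product, Finset.HasAntidiagonal.mem_antidiagonal,
      Nat.mem_divisorsAntidiagonal] at hx
    obtain ⟨hij, ⟨hax, hi⟩, ⟨hby, hj⟩⟩ := hx
    simp only
    subst hax; subst hby; rfl
  · rintro ⟨⟨a, x⟩, ⟨b, y⟩⟩ _; rfl
  · rintro ⟨⟨i, j⟩, ⟨⟨a, x⟩, ⟨b, y⟩⟩⟩ _; rfl

lemma sigma_cast (k i : ℕ) : ((ArithmeticFunction.sigma k) i : ℚ)
    = ∑ p ∈ i.divisorsAntidiagonal, (p.1 : ℚ)^k := by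
  rw [Nat.sum_divisorsAntidiagonal (fun d e => (d:ℚ)^k), ArithmeticFunction.sigma_apply]
  push_cast
  rfl

lemma T_eq (n : ℕ) :
    ∑ ij ∈ antidiagonal n, ((ArithmeticFunction.sigma 1) ij.1 : ℚ) * ((ArithmeticFunction.sigma 3) ij.2 : ℚ)
    = ∑ p ∈ Zs n, (p.1.1 : ℚ) * (p.2.1 : ℚ)^3 := by
  rw [← conv_to_Z n (fun a b => (a:ℚ) * (b:ℚ)^3)]
  apply Finset.sum_congr rfl
  intro ij _
  rw [sigma_cast 1, sigma_cast 3, Finset.sum_mul_sum]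
  simp [pow_one]

lemma sigma_div_cast (k n : ℕ) :
    ((ArithmeticFunction.sigma k) n : ℚ) = ∑ e ∈ n.divisors, (e:ℚ)^k := by
  rw [ArithmeticFunction.sigma_apply]
  push_cast
  rfl

lemma key (n : ℕ) :
    240 * (∑ p ∈ Zs n, (p.1.1:ℚ) * (p.2.1:ℚ)^3)
    = 21*((ArithmeticFunction.sigma 5) n : ℚ) + 10*((ArithmeticFunction.sigma 3) n : ℚ)
      - ((ArithmeticFunction.sigma 1) n : ℚ) - 30*(n:ℚ)*((ArithmeticFunction.sigma 3) n : ℚ) := by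
  classical
  set s := (Zs n).filter (fun p => p.2.1 < p.1.1) with hs
  -- T = T' (swap)
  have hswap : (∑ p ∈ Zs n, (p.1.1:ℚ) * (p.2.1:ℚ)^3)
      = ∑ p ∈ Zs n, (p.1.1:ℚ)^3 * (p.2.1:ℚ) := by
    rw [swap_whole n (fun a b => (a:ℚ) * (b:ℚ)^3)]
    exact Finset.sum_congr rfl (fun p _ => by ring)
  -- Master identity from the two splittings
  have hxy := split3 (Zs n) (fun p => Fq p.1.1 p.2.1) (fun p => p.1.2) (fun p => p.2.2)
  rw [bij1 n Fq, bij2 n Fq, diag_xy n Fq] at hxy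
  have hab := split3 (Zs n) (fun p => Fq p.1.1 p.2.1) (fun p => p.1.1) (fun p => p.2.1)
  rw [swap_lt n Fq, diag_ab n Fq] at hab
  -- combine: sum over s of the bracket equals E - DF
  have hbracket : ∑ p ∈ s, (Fq p.1.1 p.2.1 + Fq p.2.1 p.1.1
      - Fq p.2.1 (p.1.1 - p.2.1) - Fq (p.1.1 - p.2.1) p.2.1)
      = (∑ e ∈ n.divisors, ∑ a ∈ Ico 1 e, Fq a (e - a))
        - ∑ e ∈ n.divisors, ∑ _x ∈ Ico 1 e, Fq (n / e) (n / e) := by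
    rw [Finset.sum_sub_distrib, Finset.sum_sub_distrib, Finset.sum_add_distrib]
    rw [← hs] at hxy hab
    linarith [hxy, hab]
  -- pointwise evaluation of the bracket
  have hpt : ∀ p ∈ s, (Fq p.1.1 p.2.1 + Fq p.2.1 p.1.1
      - Fq p.2.1 (p.1.1 - p.2.1) - Fq (p.1.1 - p.2.1) p.2.1)
      = 8 * ((p.1.1:ℚ)^3 * (p.2.1:ℚ) + (p.1.1:ℚ) * (p.2.1:ℚ)^3) := by
    rintro p hp
    rw [hs, Finset.mem_filter] at hp
    have hlt : p.2.1 < p.1.1 := hp.2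
    have hc : ((p.1.1 - p.2.1 : ℕ) : ℚ) = (p.1.1:ℚ) - (p.2.1:ℚ) := Nat.cast_sub hlt.le
    unfold Fq
    rw [hc]; ring
  rw [Finset.sum_congr rfl hpt] at hbracket
  -- identify the a³b-sum over s with the full sum minus diagonal
  have hab3 := split3 (Zs n) (fun p => (p.1.1:ℚ)^3 * (p.2.1:ℚ)) (fun p => p.1.1) (fun p => p.2.1)
  rw [swap_lt n (fun a b => (a:ℚ)^3 * (b:ℚ)), diag_ab n (fun a b => (a:ℚ)^3 * (b:ℚ)), ← hs] at hab3
  -- LHS of hbracket: 8 * (Σ_s a³b + Σ_s ab³), and Σ_s ab³ = Σ over the swapped set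
  have hsum8 : ∑ p ∈ s, 8 * ((p.1.1:ℚ)^3 * (p.2.1:ℚ) + (p.1.1:ℚ) * (p.2.1:ℚ)^3)
      = 8 * ((∑ p ∈ s, (p.1.1:ℚ)^3 * (p.2.1:ℚ)) + ∑ p ∈ s, (p.2.1:ℚ)^3 * (p.1.1:ℚ)) := by
    rw [mul_add, Finset.mul_sum, Finset.mul_sum, ← Finset.sum_add_distrib]
    exact Finset.sum_congr rfl (fun p _ => by ring)
  rw [hsum8] at hbracket
  -- evaluate the divisor sums
  have hE : (∑ e ∈ n.divisors, ∑ a ∈ Ico 1 e, Fq a (e - a))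
      = ∑ e ∈ n.divisors, (21*(e:ℚ)^5 - 30*(e:ℚ)^4 + 10*(e:ℚ)^3 - (e:ℚ))/30 :=
    Finset.sum_congr rfl (fun e he => inner_eval (Nat.pos_of_mem_divisors he))
  have hconst : ∀ (c : ℚ) (e : ℕ), e ∈ n.divisors → ∑ _x ∈ Ico 1 e, c = ((e:ℚ) - 1) * c := by
    intro c e he
    rw [Finset.sum_const, Nat.card_Ico]
    have : 0 < e := Nat.pos_of_mem_divisors he
    rw [nsmul_eq_mul, Nat.cast_sub this]
    push_cast; ring
  have hDF : (∑ e ∈ n.divisors, ∑ _x ∈ Ico 1 e, Fq (n / e) (n / e))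
      = ∑ e ∈ n.divisors, ((e:ℚ) - 1) * (9 * ((n/e : ℕ):ℚ)^4) := by
    apply Finset.sum_congr rfl
    intro e he
    rw [hconst _ e he]
    congr 1
    unfold Fq; ring
  have hD3 : (∑ e ∈ n.divisors, ∑ _x ∈ Ico 1 e, ((n / e : ℕ):ℚ)^3 * ((n / e : ℕ):ℚ))
      = ∑ e ∈ n.divisors, ((e:ℚ) - 1) * ((n/e : ℕ):ℚ)^4 := by
    apply Finset.sum_congr rfl
    intro e he
    rw [hconst _ e he]
    congr 1; ring
  rw [hE, hDF] at hbracket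
  rw [hD3] at hab3
  -- divisor-sum evaluations
  have hq : ∀ e ∈ n.divisors, (e:ℚ) * ((n/e : ℕ):ℚ) = (n:ℚ) := by
    intro e he
    rw [Nat.mem_divisors] at he
    have := Nat.mul_div_cancel' he.1
    exact_mod_cast congrArg (Nat.cast : ℕ → ℚ) this
  have hDv : ∑ e ∈ n.divisors, ((e:ℚ) - 1) * ((n/e : ℕ):ℚ)^4
      = (n:ℚ) * ((ArithmeticFunction.sigma 3) n : ℚ) - ((ArithmeticFunction.sigma 4) n : ℚ) := by
    have h1 : ∀ e ∈ n.divisors, ((e:ℚ) - 1) * ((n/e : ℕ):ℚ)^4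
        = (n:ℚ) * ((n/e : ℕ):ℚ)^3 - ((n/e : ℕ):ℚ)^4 := by
      intro e he
      have := hq e he
      linear_combination ((n/e : ℕ):ℚ)^3 * this
    rw [Finset.sum_congr rfl h1, Finset.sum_sub_distrib, ← Finset.mul_sum]
    rw [Nat.sum_div_divisors n (fun d => (d:ℚ)^3), Nat.sum_div_divisors n (fun d => (d:ℚ)^4)]
    rw [sigma_div_cast 3 n, sigma_div_cast 4 n]
  have hEv : ∑ e ∈ n.divisors, (21*(e:ℚ)^5 - 30*(e:ℚ)^4 + 10*(e:ℚ)^3 - (e:ℚ))/30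
      = (21*((ArithmeticFunction.sigma 5) n : ℚ) - 30*((ArithmeticFunction.sigma 4) n : ℚ)
        + 10*((ArithmeticFunction.sigma 3) n : ℚ) - ((ArithmeticFunction.sigma 1) n : ℚ))/30 := by
    rw [sigma_div_cast 5 n, sigma_div_cast 4 n, sigma_div_cast 3 n, sigma_div_cast 1 n]
    rw [← Finset.sum_div]
    congr 1
    have hgen : ∀ t : Finset ℕ, ∑ e ∈ t, (21*(e:ℚ)^5 - 30*(e:ℚ)^4 + 10*(e:ℚ)^3 - (e:ℚ))
        = 21*(∑ e ∈ t, (e:ℚ)^5) - 30*(∑ e ∈ t, (e:ℚ)^4) + 10*(∑ e ∈ t, (e:ℚ)^3)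
          - ∑ e ∈ t, (e:ℚ)^1 := by
      intro t
      induction t using Finset.cons_induction with
      | empty => simp
      | cons a t ha ih =>
        rw [Finset.sum_cons, ih, Finset.sum_cons, Finset.sum_cons, Finset.sum_cons,
          Finset.sum_cons]
        ring
    exact hgen n.divisors
  have h9 : (∑ e ∈ n.divisors, ((e:ℚ) - 1) * (9 * ((n/e : ℕ):ℚ)^4))
      = 9 * ((n:ℚ) * ((ArithmeticFunction.sigma 3) n : ℚ) - ((ArithmeticFunction.sigma 4) n : ℚ)) := by
    rw [← hDv, Finset.mul_sum]
    exact Finset.sum_congr rfl (fun e _ => by ring)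
  rw [hDv] at hab3
  rw [hEv, h9] at hbracket
  -- final put-together
  rw [hswap]
  -- Σ_s b³a = Σ_{a<b} a³b from swap_lt reversed; connect everything linearly
  linarith [hbracket, hab3]

theorem stmt10 : E2 * E4 - E6 = 3 * Dq E4 := by
  ext n
  rw [map_sub, PowerSeries.coeff_mul]
  have hc2 : ∀ i : ℕ, (PowerSeries.coeff i) E2
      = (if i = 0 then (1:ℚ) else 0) + (-24) * ((ArithmeticFunction.sigma 1) i : ℚ) := by
    intro i
    rw [E2, PowerSeries.coeff_mk]
    by_cases h : i = 0 <;> simp [h]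
  have hc4 : ∀ i : ℕ, (PowerSeries.coeff i) E4
      = (if i = 0 then (1:ℚ) else 0) + 240 * ((ArithmeticFunction.sigma 3) i : ℚ) := by
    intro i
    rw [E4, PowerSeries.coeff_mk]
    by_cases h : i = 0 <;> simp [h]
  have hc6 : (PowerSeries.coeff n) E6
      = (if n = 0 then (1:ℚ) else 0) + (-504) * ((ArithmeticFunction.sigma 5) n : ℚ) := by
    rw [E6, PowerSeries.coeff_mk]
    by_cases h : n = 0 <;> simp [h]
  have hA : ∀ g : ℕ → ℚ, ∑ p ∈ antidiagonal n, (if p.1 = 0 then (1:ℚ) else 0) * g p.2 = g n := by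
    intro g
    rw [Finset.sum_eq_single_of_mem (0, n) (by simp)]
    · simp
    · rintro ⟨i, j⟩ hmem hne
      rw [Finset.HasAntidiagonal.mem_antidiagonal] at hmem
      simp only at hmem ⊢
      have hi : i ≠ 0 := by
        rintro rfl
        exact hne (by simp at hmem ⊢; omega)
      simp [hi]
  have hB : ∀ g : ℕ → ℚ, ∑ p ∈ antidiagonal n, g p.1 * (if p.2 = 0 then (1:ℚ) else 0) = g n := by
    intro g
    rw [Finset.sum_eq_single_of_mem (n, 0) (by simp)]
    · simp
    · rintro ⟨i, j⟩ hmem hne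
      rw [Finset.HasAntidiagonal.mem_antidiagonal] at hmem
      simp only at hmem ⊢
      have hj : j ≠ 0 := by
        rintro rfl
        exact hne (by simp at hmem ⊢; omega)
      simp [hj]
  have hC : ∑ p ∈ antidiagonal n, (if p.1 = 0 then (1:ℚ) else 0) * (if p.2 = 0 then (1:ℚ) else 0)
      = if n = 0 then (1:ℚ) else 0 := by
    by_cases hn : n = 0
    · subst hn; simp
    · rw [if_neg hn]
      apply Finset.sum_eq_zero
      rintro ⟨i, j⟩ hmem
      rw [Finset.HasAntidiagonal.mem_antidiagonal] at hmem
      simp only at hmem ⊢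
      by_cases hi : i = 0
      · have hj : j ≠ 0 := by omega
        simp [hj]
      · simp [hi]
  have hexp : ∑ p ∈ antidiagonal n, (PowerSeries.coeff p.1) E2 * (PowerSeries.coeff p.2) E4
      = (if n = 0 then (1:ℚ) else 0) + 240 * ((ArithmeticFunction.sigma 3) n : ℚ)
        + (-24) * ((ArithmeticFunction.sigma 1) n : ℚ)
        + (-5760) * ∑ ij ∈ antidiagonal n,
            ((ArithmeticFunction.sigma 1) ij.1 : ℚ) * ((ArithmeticFunction.sigma 3) ij.2 : ℚ) := by
    have step1 : ∑ p ∈ antidiagonal n, (PowerSeries.coeff p.1) E2 * (PowerSeries.coeff p.2) E4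
        = ∑ p ∈ antidiagonal n,
          ((if p.1 = 0 then (1:ℚ) else 0) * (if p.2 = 0 then (1:ℚ) else 0)
          + (if p.1 = 0 then (1:ℚ) else 0) * (240 * ((ArithmeticFunction.sigma 3) p.2 : ℚ))
          + ((-24) * ((ArithmeticFunction.sigma 1) p.1 : ℚ)) * (if p.2 = 0 then (1:ℚ) else 0)
          + (-5760) * (((ArithmeticFunction.sigma 1) p.1 : ℚ) * ((ArithmeticFunction.sigma 3) p.2 : ℚ))) := by
      apply Finset.sum_congr rfl
      intro p _
      rw [hc2 p.1, hc4 p.2]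
      ring
    rw [step1, Finset.sum_add_distrib, Finset.sum_add_distrib, Finset.sum_add_distrib,
      hC, hA (fun j => 240 * ((ArithmeticFunction.sigma 3) j : ℚ)),
      hB (fun i => (-24) * ((ArithmeticFunction.sigma 1) i : ℚ)), ← Finset.mul_sum]
  rw [hexp, hc6]
  have hrhs : (PowerSeries.coeff n) (3 * Dq E4)
      = 3 * ((n:ℚ) * ((if n = 0 then (1:ℚ) else 0) + 240 * ((ArithmeticFunction.sigma 3) n : ℚ))) := by
    rw [show (3 : PowerSeries ℚ) = PowerSeries.C (R := ℚ) 3 by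
      exact (map_ofNat (PowerSeries.C (R := ℚ)) 3).symm]
    rw [PowerSeries.coeff_C_mul, Dq, PowerSeries.coeff_mk, hc4 n]
  rw [hrhs]
  have hk := key n
  rw [← T_eq n] at hk
  have hifmul : (n:ℚ) * (if n = 0 then (1:ℚ) else 0) = 0 := by
    by_cases h : n = 0 <;> simp [h]
  by_cases h : n = 0
  · subst h
    simp at hk ⊢
  · rw [if_neg h]
    linarith [hk, hifmul]
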